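/- Let r ≥ 2 be an integer and let p, q be coprime integers. Then S_{r−1}(C(p,q)) = 0, where S_{r−1} is the Chebyshev polynomial of the second kind of degree r−1 evaluated on the matrix C(p,q). (Topologically: a simple closed curve on the torus colored by the r-dimensional irreducible representation of the quantum group of SL(2,ℂ) gives the zero operator.) -/

import Mathlib

open Complex Matrix

/-- `t = exp(iπ/(2r))`. -/
noncomputable def tconst (r : ℕ) : ℂ := Complex.exp (Real.pi * Complex.I / (2 * r))

/-- `ε(k,j) = 1` if `j ≡ k (mod 2r)`, `−1` if `j ≡ −k (mod 2r)`, `0` otherwise. -/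
def eps (r : ℕ) (k j : ℤ) : ℤ :=
  if (2 * (r : ℤ)) ∣ (j - k) then 1 else if (2 * (r : ℤ)) ∣ (j + k) then -1 else 0

/-- The matrix of the Weyl quantization of `2 cos 2π(px+qy)` in the basis `ζ_1, …, ζ_{r−1}`:
`C(p,q)_{k,m} = t^{−pq} (t^{2qm} ε(k, m−p) + t^{−2qm} ε(k, m+p))`, with indices shifted so that
the index `k : Fin (r-1)` corresponds to `k+1 ∈ {1, …, r−1}`. -/
noncomputable def Cmat (r : ℕ) (p q : ℤ) : Matrix (Fin (r - 1)) (Fin (r - 1)) ℂ :=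
  Matrix.of fun k m =>
    tconst r ^ (-(p * q)) *
      (tconst r ^ (2 * q * ((m : ℤ) + 1)) * (eps r ((k : ℤ) + 1) (((m : ℤ) + 1) - p) : ℂ) +
       tconst r ^ (-(2 * q * ((m : ℤ) + 1))) * (eps r ((k : ℤ) + 1) (((m : ℤ) + 1) + p) : ℂ))

/-- The quantized integer `[n] = sin(nπ/r)/sin(π/r)`. -/
noncomputable def qint (r : ℕ) (n : ℤ) : ℝ :=
  Real.sin (n * Real.pi / r) / Real.sin (Real.pi / r)

/-- Chebyshev polynomials of the second kind: `S_0 = 1`, `S_1 = X`,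
`S_{n+1} = X·S_n − S_{n−1}`. -/
noncomputable def chebS : ℕ → Polynomial ℂ
  | 0 => 1
  | 1 => Polynomial.X
  | (n + 2) => Polynomial.X * chebS (n + 1) - chebS n

lemma tconst_ne_zero (r : ℕ) : tconst r ≠ 0 := Complex.exp_ne_zero _

lemma tz_add (r : ℕ) (a b : ℤ) : tconst r ^ (a + b) = tconst r ^ a * tconst r ^ b :=
  zpow_add₀ (tconst_ne_zero r) a b

lemma tconst_zpow (r : ℕ) (n : ℤ) :
    tconst r ^ n = Complex.exp (n * (Real.pi * Complex.I / (2 * r))) := by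
  rw [Complex.exp_int_mul]; rfl

lemma tconst_zpow_eq_one_iff (r : ℕ) (hr : 0 < r) (n : ℤ) :
    tconst r ^ n = 1 ↔ (4 * (r : ℤ)) ∣ n := by
  rw [tconst_zpow, Complex.exp_eq_one_iff]
  have hπ : (Real.pi : ℂ) ≠ 0 := by
    exact_mod_cast Complex.ofReal_ne_zero.mpr Real.pi_ne_zero
  have hI : Complex.I ≠ 0 := Complex.I_ne_zero
  have hrc : ((r : ℂ)) ≠ 0 := by
    exact_mod_cast Nat.pos_iff_ne_zero.mp hr
  constructor
  · rintro ⟨m, hm⟩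
    refine ⟨m, ?_⟩
    have h2 : (n : ℂ) = 4 * r * m := by
      field_simp at hm
      -- try to conclude
      have hm2 : (n : ℂ) * (Real.pi * Complex.I) = 4 * r * m * (Real.pi * Complex.I) := by
        linear_combination (↑Real.pi * Complex.I) * hm
      exact mul_right_cancel₀ (by simp [hπ, hI]) hm2
    exact_mod_cast h2
  · rintro ⟨m, rfl⟩
    refine ⟨m, ?_⟩
    push_cast
    field_simp
    ring

lemma small_dvd {a x : ℤ} (h : a ∣ x) (h1 : -a < x) (h2 : x < a) : x = 0 := by
  rcases lt_trichotomy x 0 with hx | hx | hx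
  · have h' : a ∣ -x := h.neg_right
    have := Int.le_of_dvd (by omega) h'
    omega
  · exact hx
  · have := Int.le_of_dvd hx h
    omega

lemma dvd_shift (a x s : ℤ) : a ∣ x + a * s ↔ a ∣ x := by
  constructor
  · intro h; have := h.sub (Dvd.intro s rfl); simpa using this
  · intro h; exact h.add (Dvd.intro s rfl)

lemma eps_period (r : ℕ) (k j s : ℤ) : eps r k (j + 2 * r * s) = eps r k j := by
  unfold eps
  have h1 : j + 2*r*s - k = (j - k) + 2*r*s := by ring
  have h2 : j + 2*r*s + k = (j + k) + 2*r*s := by ring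
  rw [h1, h2]
  simp only [dvd_shift]

lemma eps_neg (r : ℕ) {k : ℤ} (j : ℤ) (hk0 : 0 < k) (hkr : k < r) :
    eps r k (-j) = - eps r k j := by
  unfold eps
  have hne : ¬ ((2 * (r:ℤ)) ∣ (j - k) ∧ (2 * (r:ℤ)) ∣ (j + k)) := by
    rintro ⟨h1, h2⟩
    have h3 : (2*(r:ℤ)) ∣ 2*k := by
      have := h2.sub h1; simpa [show j + k - (j-k) = 2*k by ring] using this
    have := Int.le_of_dvd (by omega) h3
    omega
  have e1 : -j - k = -(j + k) := by ring
  have e2 : -j + k = -(j - k) := by ring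
  rw [e1, e2]
  simp only [dvd_neg]
  by_cases h1 : (2 * (r:ℤ)) ∣ (j - k) <;> by_cases h2 : (2 * (r:ℤ)) ∣ (j + k) <;>
    simp [h1, h2] <;> exact absurd ⟨h1, h2⟩ hne

lemma tz_eq (r : ℕ) (hr : 0 < r) {a b : ℤ} (h : 4 * (r:ℤ) ∣ a - b) :
    tconst r ^ a = tconst r ^ b := by
  have h1 : tconst r ^ (a - b) = 1 := (tconst_zpow_eq_one_iff r hr _).mpr h
  calc tconst r ^ a = tconst r ^ (b + (a - b)) := by ring_nf
    _ = tconst r ^ b * tconst r ^ (a-b) := tz_add r b (a-b)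
    _ = tconst r ^ b := by rw [h1, mul_one]

noncomputable def Gfun (r : ℕ) (p q k m : ℤ) (n : ℕ) : ℂ :=
  ∑ j ∈ Finset.range (n+1),
    tconst r ^ (-((n:ℤ)-2*(j:ℤ))^2*(p*q) + 2*((n:ℤ)-2*(j:ℤ))*q*m) *
      (eps r k (m - ((n:ℤ)-2*(j:ℤ))*p) : ℂ)

lemma Gfun_zero (r : ℕ) (p q k m : ℤ) : Gfun r p q k m 0 = (eps r k m : ℂ) := by
  unfold Gfun
  rw [Finset.sum_range_one]
  norm_num

lemma Gfun_per (r : ℕ) (hr : 0 < r) (p q k : ℤ) (n : ℕ) (m s : ℤ) :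
    Gfun r p q k (m + 2*r*s) n = Gfun r p q k m n := by
  unfold Gfun
  apply Finset.sum_congr rfl
  intro j _
  have h1 : m + 2*(r:ℤ)*s - ((n:ℤ)-2*(j:ℤ))*p = (m - ((n:ℤ)-2*(j:ℤ))*p) + 2*r*s := by ring
  rw [h1, eps_period]
  congr 1
  apply tz_eq r hr
  exact ⟨((n:ℤ)-2*(j:ℤ))*q*s, by ring⟩

lemma Gfun_odd (r : ℕ) (hr : 0 < r) (p q : ℤ) {k : ℤ} (hk0 : 0 < k) (hkr : k < r)
    (n : ℕ) (m : ℤ) : Gfun r p q k (-m) n = - Gfun r p q k m n := by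
  unfold Gfun
  rw [← Finset.sum_neg_distrib]
  rw [← Finset.sum_range_reflect (fun j => -(tconst r ^ (-((n:ℤ)-2*(j:ℤ))^2*(p*q) + 2*((n:ℤ)-2*(j:ℤ))*q*m) * (eps r k (m - ((n:ℤ)-2*(j:ℤ))*p) : ℂ))) (n+1)]
  apply Finset.sum_congr rfl
  intro j hj
  have hjn : j ≤ n := by have := Finset.mem_range.mp hj; omega
  have hcast : ((n + 1 - 1 - j : ℕ) : ℤ) = (n:ℤ) - (j:ℤ) := by omega
  simp only [hcast]
  have hnu : (n:ℤ) - 2*((n:ℤ) - (j:ℤ)) = -((n:ℤ) - 2*(j:ℤ)) := by ring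
  rw [hnu]
  have harg : m - -((n:ℤ)-2*(j:ℤ))*p = -((-m) - ((n:ℤ)-2*(j:ℤ))*p) := by ring
  rw [harg, eps_neg r _ hk0 hkr]
  push_cast
  have hexp : -(-((n:ℤ)-2*(j:ℤ)))^2*(p*q) + 2*(-((n:ℤ)-2*(j:ℤ)))*q*m
      = -((n:ℤ)-2*(j:ℤ))^2*(p*q) + 2*((n:ℤ)-2*(j:ℤ))*q*(-m) := by ring
  rw [hexp]
  ring

lemma Gfun_rec (r : ℕ) (p q k : ℤ) (n : ℕ) (m : ℤ) :
    tconst r ^ (-(p*q)) * (tconst r ^ (2*q*m) * Gfun r p q k (m - p) (n+1)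
      + tconst r ^ (-(2*q*m)) * Gfun r p q k (m + p) (n+1))
    = Gfun r p q k m (n+2) + Gfun r p q k m n := by
  set T : ℕ → ℂ := fun j =>
    tconst r ^ (-((n:ℤ)+2-2*(j:ℤ))^2*(p*q) + 2*((n:ℤ)+2-2*(j:ℤ))*q*m) *
      (eps r k (m - ((n:ℤ)+2-2*(j:ℤ))*p) : ℂ) with hT
  have key1 : tconst r ^ (-(p*q)) * (tconst r ^ (2*q*m) * Gfun r p q k (m-p) (n+1))
      = ∑ j ∈ Finset.range (n+2), T j := by
    unfold Gfun
    rw [Finset.mul_sum, Finset.mul_sum]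
    apply Finset.sum_congr rfl
    intro j _
    rw [hT]
    calc tconst r ^ (-(p*q)) * (tconst r ^ (2*q*m) *
          (tconst r ^ (-((((n+1):ℕ):ℤ)-2*(j:ℤ))^2*(p*q) + 2*((((n+1):ℕ):ℤ)-2*(j:ℤ))*q*(m-p)) *
            (eps r k ((m-p) - ((((n+1):ℕ):ℤ)-2*(j:ℤ))*p) : ℂ)))
        = (tconst r ^ (-(p*q)) * (tconst r ^ (2*q*m) *
            tconst r ^ (-((((n+1):ℕ):ℤ)-2*(j:ℤ))^2*(p*q) + 2*((((n+1):ℕ):ℤ)-2*(j:ℤ))*q*(m-p)))) *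
            (eps r k ((m-p) - ((((n+1):ℕ):ℤ)-2*(j:ℤ))*p) : ℂ) := by ring
      _ = tconst r ^ (-(p*q) + (2*q*m + (-((((n+1):ℕ):ℤ)-2*(j:ℤ))^2*(p*q) + 2*((((n+1):ℕ):ℤ)-2*(j:ℤ))*q*(m-p)))) *
            (eps r k ((m-p) - ((((n+1):ℕ):ℤ)-2*(j:ℤ))*p) : ℂ) := by
          rw [← tz_add, ← tz_add]
      _ = _ := by
          have e1 : -(p*q) + (2*q*m + (-((((n+1):ℕ):ℤ)-2*(j:ℤ))^2*(p*q) + 2*((((n+1):ℕ):ℤ)-2*(j:ℤ))*q*(m-p)))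
              = -((n:ℤ)+2-2*(j:ℤ))^2*(p*q) + 2*((n:ℤ)+2-2*(j:ℤ))*q*m := by push_cast; ring
          have e2 : (m-p) - ((((n+1):ℕ):ℤ)-2*(j:ℤ))*p = m - ((n:ℤ)+2-2*(j:ℤ))*p := by push_cast; ring
          rw [e1, e2]
  have key2 : tconst r ^ (-(p*q)) * (tconst r ^ (-(2*q*m)) * Gfun r p q k (m+p) (n+1))
      = ∑ j ∈ Finset.range (n+2), T (j+1) := by
    unfold Gfun
    rw [Finset.mul_sum, Finset.mul_sum]
    apply Finset.sum_congr rfl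
    intro j _
    rw [hT]
    calc tconst r ^ (-(p*q)) * (tconst r ^ (-(2*q*m)) *
          (tconst r ^ (-((((n+1):ℕ):ℤ)-2*(j:ℤ))^2*(p*q) + 2*((((n+1):ℕ):ℤ)-2*(j:ℤ))*q*(m+p)) *
            (eps r k ((m+p) - ((((n+1):ℕ):ℤ)-2*(j:ℤ))*p) : ℂ)))
        = (tconst r ^ (-(p*q)) * (tconst r ^ (-(2*q*m)) *
            tconst r ^ (-((((n+1):ℕ):ℤ)-2*(j:ℤ))^2*(p*q) + 2*((((n+1):ℕ):ℤ)-2*(j:ℤ))*q*(m+p)))) *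
            (eps r k ((m+p) - ((((n+1):ℕ):ℤ)-2*(j:ℤ))*p) : ℂ) := by ring
      _ = tconst r ^ (-(p*q) + (-(2*q*m) + (-((((n+1):ℕ):ℤ)-2*(j:ℤ))^2*(p*q) + 2*((((n+1):ℕ):ℤ)-2*(j:ℤ))*q*(m+p)))) *
            (eps r k ((m+p) - ((((n+1):ℕ):ℤ)-2*(j:ℤ))*p) : ℂ) := by
          rw [← tz_add, ← tz_add]
      _ = _ := by
          have e1 : -(p*q) + (-(2*q*m) + (-((((n+1):ℕ):ℤ)-2*(j:ℤ))^2*(p*q) + 2*((((n+1):ℕ):ℤ)-2*(j:ℤ))*q*(m+p)))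
              = -((n:ℤ)+2-2*((j:ℤ)+1))^2*(p*q) + 2*((n:ℤ)+2-2*((j:ℤ)+1))*q*m := by push_cast; ring
          have e2 : (m+p) - ((((n+1):ℕ):ℤ)-2*(j:ℤ))*p = m - ((n:ℤ)+2-2*((j:ℤ)+1))*p := by push_cast; ring
          rw [e1, e2]
          push_cast
          ring_nf
  have key3 : Gfun r p q k m (n+2) = ∑ j ∈ Finset.range (n+3), T j := by
    unfold Gfun
    apply Finset.sum_congr (by norm_num)
    intro j _
    rw [hT]
    have e1 : ((((n+2):ℕ)):ℤ) = (n:ℤ) + 2 := by push_cast; ring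
    rw [e1]
  have key4 : Gfun r p q k m n = ∑ j ∈ Finset.range (n+1), T (j+1) := by
    unfold Gfun
    apply Finset.sum_congr rfl
    intro j _
    rw [hT]
    have e1 : -((n:ℤ)-2*(j:ℤ))^2*(p*q) + 2*((n:ℤ)-2*(j:ℤ))*q*m
        = -((n:ℤ)+2-2*(((j+1):ℕ):ℤ))^2*(p*q) + 2*((n:ℤ)+2-2*(((j+1):ℕ):ℤ))*q*m := by push_cast; ring
    have e2 : m - ((n:ℤ)-2*(j:ℤ))*p = m - ((n:ℤ)+2-2*(((j+1):ℕ):ℤ))*p := by push_cast; ring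
    rw [e1, e2]
  rw [mul_add, key1, key2, key3, key4]
  rw [Finset.sum_range_succ' T (n+2), Finset.sum_range_succ' T (n+1)]
  ring

lemma eps_eq_zero (r : ℕ) {k x : ℤ}
    (h1 : ¬ (2 * (r:ℤ)) ∣ (x - k)) (h2 : ¬ (2 * (r:ℤ)) ∣ (x + k)) : eps r k x = 0 := by
  unfold eps; rw [if_neg h1, if_neg h2]

lemma sum_eps_mul (r : ℕ) (hr : 2 ≤ r) (F : ℤ → ℂ)
    (hFper : ∀ j s, F (j + 2*r*s) = F j) (hFodd : ∀ j, F (-j) = - F j) (j : ℤ) :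
    ∑ l ∈ Finset.range (r-1), F ((l:ℤ)+1) * (eps r ((l:ℤ)+1) j : ℂ) = F j := by
  have h2r : (0:ℤ) < 2*r := by positivity
  obtain ⟨j0, hjj, hj00, hj0lt⟩ : ∃ j0 : ℤ, j = j0 + 2*r*(j/(2*r)) ∧ 0 ≤ j0 ∧ j0 < 2*r := by
    refine ⟨j % (2*r), (Int.emod_add_mul_ediv j (2*r)).symm, Int.emod_nonneg j (by omega),
      Int.emod_lt_of_pos j h2r⟩
  have hFj : F j = F j0 := by rw [hjj, hFper]
  have hepsj : ∀ k : ℤ, eps r k j = eps r k j0 := by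
    intro k; conv_lhs => rw [hjj]
    exact eps_period r k j0 _
  rw [hFj]
  have hsum : ∀ l ∈ Finset.range (r-1),
      F ((l:ℤ)+1) * (eps r ((l:ℤ)+1) j : ℂ) = F ((l:ℤ)+1) * (eps r ((l:ℤ)+1) j0 : ℂ) := by
    intro l _; rw [hepsj]
  rw [Finset.sum_congr rfl hsum]
  clear hsum hepsj hFj hjj
  have hcase : j0 = 0 ∨ (1 ≤ j0 ∧ j0 ≤ r - 1) ∨ j0 = r ∨ (r+1 ≤ j0 ∧ j0 ≤ 2*r - 1) := by omega
  rcases hcase with h0 | hmid | hr0 | hhigh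
  · subst h0
    have hF0 : F (0:ℤ) = 0 := by
      have h := hFodd 0; rw [neg_zero] at h
      have : F 0 + F 0 = 0 := by linear_combination h
      exact add_self_eq_zero.mp this
    rw [hF0]
    apply Finset.sum_eq_zero
    intro l hl
    have hlr : (l:ℤ) + 1 ≤ r - 1 := by
      have := Finset.mem_range.mp hl; omega
    rw [eps_eq_zero r]
    · simp
    · intro hd; have := small_dvd hd (by omega) (by omega); omega
    · intro hd; have := small_dvd hd (by omega) (by omega); omega
  · obtain ⟨h1, h2⟩ := hmid
    have hl0lt : j0.toNat - 1 < r - 1 := by omega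
    rw [Finset.sum_eq_single (j0.toNat - 1)]
    · have hcast : ((j0.toNat - 1 : ℕ) : ℤ) + 1 = j0 := by omega
      rw [hcast]
      have heq : eps r j0 j0 = 1 := by
        unfold eps; rw [if_pos (by simp)]
      rw [heq]; simp
    · intro l hl hne
      have hlr : (l:ℤ) + 1 ≤ r - 1 := by have := Finset.mem_range.mp hl; omega
      have hlj : (l:ℤ) + 1 ≠ j0 := by
        intro h; apply hne; omega
      rw [eps_eq_zero r]
      · simp
      · intro hd; have := small_dvd hd (by omega) (by omega); omega
      · intro hd; have := small_dvd hd (by omega) (by omega); omega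
    · intro h; exact absurd (Finset.mem_range.mpr hl0lt) h
  · subst hr0
    have hFr : F (r:ℤ) = 0 := by
      have h1 : F (-(r:ℤ) + 2*r*1) = F (-(r:ℤ)) := hFper _ _
      have h2 : F (-(r:ℤ)) = - F (r:ℤ) := hFodd _
      have h3 : (-(r:ℤ) + 2*r*1) = (r:ℤ) := by ring
      rw [h3, h2] at h1
      have : F (r:ℤ) + F (r:ℤ) = 0 := by linear_combination h1
      exact add_self_eq_zero.mp this
    rw [hFr]
    apply Finset.sum_eq_zero
    intro l hl
    have hlr : (l:ℤ) + 1 ≤ r - 1 := by have := Finset.mem_range.mp hl; omega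
    rw [eps_eq_zero r]
    · simp
    · intro hd; have := small_dvd hd (by omega) (by omega); omega
    · intro hd; have := small_dvd hd (by omega) (by omega); omega
  · obtain ⟨h1, h2⟩ := hhigh
    have hl0lt : (2*r - j0.toNat) - 1 < r - 1 := by omega
    rw [Finset.sum_eq_single ((2*r - j0.toNat) - 1)]
    · have hcast : (((2*r - j0.toNat) - 1 : ℕ) : ℤ) + 1 = 2*r - j0 := by omega
      rw [hcast]
      have heq : eps r (2*(r:ℤ) - j0) j0 = -1 := by
        unfold eps
        rw [if_neg, if_pos]
        · exact ⟨1, by ring⟩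
        · intro hd; have := small_dvd hd (by omega) (by omega); omega
      rw [heq]
      have hFv : F (2*(r:ℤ) - j0) = - F j0 := by
        have e1 : F (-j0 + 2*r*1) = F (-j0) := hFper _ _
        have e2 : (-j0 + 2*(r:ℤ)*1) = 2*(r:ℤ) - j0 := by ring
        rw [e2] at e1
        rw [e1, hFodd]
      rw [hFv]; push_cast; ring
    · intro l hl hne
      have hlr : (l:ℤ) + 1 ≤ r - 1 := by have := Finset.mem_range.mp hl; omega
      have hlj : (l:ℤ) + 1 ≠ 2*(r:ℤ) - j0 := by
        intro h; apply hne; omega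
      rw [eps_eq_zero r]
      · simp
      · intro hd; have := small_dvd hd (by omega) (by omega); omega
      · intro hd
        have hd2 : (2*(r:ℤ)) ∣ (j0 + ((l:ℤ)+1) - 2*r) := by
          have := hd.sub (Dvd.intro 1 rfl); simpa using this
        have := small_dvd hd2 (by omega) (by omega); omega
    · intro h; exact absurd (Finset.mem_range.mpr hl0lt) h

lemma per_mul (r : ℕ) (g : ℤ → ℂ) (hg : ∀ j : ℤ, g (j + r) = g j) : ∀ (s : ℤ) (x : ℤ), g (x + r*s) = g x := by
  intro s
  induction s using Int.induction_on with
  | zero => simp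
  | succ n ih =>
    intro x
    have e : x + r*((n:ℤ)+1) = (x + r*n) + r := by ring
    rw [e, hg, ih]
  | pred n ih =>
    intro x
    have e : x + r*(-(n:ℤ)-1) = (x + r*(-(n:ℤ))) - r := by ring
    have e2 : g ((x + r*(-(n:ℤ))) - r) = g (x + r*(-(n:ℤ))) := by
      have := hg ((x + r*(-(n:ℤ))) - r); rw [sub_add_cancel] at this; rw [this]
    rw [e, e2, ih]

lemma per_shift1 (r : ℕ) (g : ℤ → ℂ) (hr : 0 < r) (hg : ∀ j : ℤ, g (j + r) = g j) :
    ∑ j ∈ Finset.range r, g ((j:ℤ) + 1) = ∑ j ∈ Finset.range r, g (j:ℤ) := by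
  obtain ⟨r', rfl⟩ : ∃ r', r = r' + 1 := ⟨r - 1, by omega⟩
  rw [Finset.sum_range_succ (fun j : ℕ => g ((j:ℤ)+1)) r',
      Finset.sum_range_succ' (fun j : ℕ => g (j:ℤ)) r']
  have e1 : ((r':ℤ) + 1) = (0:ℤ) + (r'+1 : ℕ) := by push_cast; ring
  have e2 : g ((r':ℤ)+1) = g 0 := by rw [e1, hg]
  rw [e2]
  congr 1

lemma per_shift_nat (r : ℕ) (g : ℤ → ℂ) (hr : 0 < r) (hg : ∀ j : ℤ, g (j + r) = g j) (a : ℕ) :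
    ∑ j ∈ Finset.range r, g ((j:ℤ) + a) = ∑ j ∈ Finset.range r, g (j:ℤ) := by
  induction a generalizing g with
  | zero => simp
  | succ n ih =>
    have hg' : ∀ j : ℤ, (fun x => g (x + n)) (j + r) = (fun x => g (x + n)) j := by
      intro j; simp only
      have e : (j:ℤ) + r + n = (j + n) + r := by ring
      rw [e, hg]
    calc ∑ j ∈ Finset.range r, g ((j:ℤ) + (n+1 : ℕ))
        = ∑ j ∈ Finset.range r, (fun x => g (x + n)) ((j:ℤ) + 1) := by
          apply Finset.sum_congr rfl; intro j _; simp only; push_cast; ring_nf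
      _ = ∑ j ∈ Finset.range r, (fun x => g (x + n)) (j:ℤ) := per_shift1 r (fun x => g (x + (n:ℤ))) hr hg'
      _ = ∑ j ∈ Finset.range r, g ((j:ℤ) + n) := by simp only
      _ = ∑ j ∈ Finset.range r, g (j:ℤ) := ih g hg

lemma per_shift (r : ℕ) (g : ℤ → ℂ) (hr : 0 < r) (hg : ∀ j : ℤ, g (j + r) = g j) (a : ℤ) :
    ∑ j ∈ Finset.range r, g ((j:ℤ) + a) = ∑ j ∈ Finset.range r, g (j:ℤ) := by
  have hN : 0 ≤ a + r * (a.natAbs : ℤ) := by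
    have hn : (0:ℤ) ≤ (a.natAbs : ℤ) := Int.natCast_nonneg _
    have h1 : (1:ℤ) ≤ r := by exact_mod_cast hr
    rcases Int.natAbs_eq a with h | h
    · nlinarith
    · nlinarith
  have e : ∀ j : ℕ, g ((j:ℤ) + a) = g ((j:ℤ) + ((a + r * a.natAbs).toNat : ℕ)) := by
    intro j
    have e2 : ((j:ℤ) + ((a + r * a.natAbs).toNat : ℕ)) = ((j:ℤ) + a) + r * a.natAbs := by
      rw [Int.toNat_of_nonneg hN]; ring
    rw [e2, per_mul r g hg]
  rw [Finset.sum_congr rfl (fun j _ => e j)]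
  exact per_shift_nat r g hr hg _

lemma per_reflect (r : ℕ) (g : ℤ → ℂ) (hr : 0 < r) (hg : ∀ j : ℤ, g (j + r) = g j) (a : ℤ) :
    ∑ j ∈ Finset.range r, g (a - (j:ℤ)) = ∑ j ∈ Finset.range r, g (j:ℤ) := by
  rw [← Finset.sum_range_reflect (fun j : ℕ => g (a - (j:ℤ))) r]
  have e : ∀ j ∈ Finset.range r, g (a - ((r - 1 - j : ℕ):ℤ)) = g ((j:ℤ) + (a - r + 1)) := by
    intro j hj
    have hj' := Finset.mem_range.mp hj
    have e2 : ((r - 1 - j : ℕ):ℤ) = (r:ℤ) - 1 - j := by omega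
    rw [e2]
    congr 1
    ring
  rw [Finset.sum_congr rfl e]
  exact per_shift r g hr hg _

lemma key_sum (r : ℕ) (hr : 2 ≤ r) (p q : ℤ) (hpq : IsCoprime p q) {k : ℤ}
    (hk0 : 0 < k) (hkr : k < (r:ℤ)) (c : ℤ) :
    ∑ j ∈ Finset.range r,
      (tconst r ^ (-(4*(j:ℤ)*q*(c+(j:ℤ)*p))) * (eps r k (c + 2*(j:ℤ)*p) : ℂ)) = 0 := by
  have hr0 : 0 < r := by omega
  have hrz : (0:ℤ) < (r:ℤ) := by exact_mod_cast hr0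
  set gp : ℤ → ℂ := fun j =>
    tconst r ^ (-(4*j*q*(c+j*p))) * (if (2*(r:ℤ)) ∣ (c + 2*j*p - k) then (1:ℂ) else 0) with hgp
  set gm : ℤ → ℂ := fun j =>
    tconst r ^ (-(4*j*q*(c+j*p))) * (if (2*(r:ℤ)) ∣ (c + 2*j*p + k) then (1:ℂ) else 0) with hgm
  have hsplit : ∀ j ∈ Finset.range r,
      tconst r ^ (-(4*(j:ℤ)*q*(c+(j:ℤ)*p))) * (eps r k (c + 2*(j:ℤ)*p) : ℂ)
        = gp (j:ℤ) - gm (j:ℤ) := by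
    intro j _
    rw [hgp, hgm]
    simp only []
    unfold eps
    by_cases h1 : (2*(r:ℤ)) ∣ (c + 2*(j:ℤ)*p - k) <;>
      by_cases h2 : (2*(r:ℤ)) ∣ (c + 2*(j:ℤ)*p + k)
    · exfalso
      have h3 : (2*(r:ℤ)) ∣ 2*k := by
        have := h2.sub h1
        simpa [show c + 2*(j:ℤ)*p + k - (c + 2*(j:ℤ)*p - k) = 2*k by ring] using this
      have := Int.le_of_dvd (by omega) h3
      omega
    · rw [if_pos h1, if_pos h1, if_neg h2]; norm_num
    · rw [if_neg h1, if_neg h1, if_pos h2, if_pos h2]; push_cast; ring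
    · rw [if_neg h1, if_neg h1, if_neg h2, if_neg h2]; norm_num
  rw [Finset.sum_congr rfl hsplit, Finset.sum_sub_distrib]
  -- gcd setup
  set dN : ℕ := p.gcd r with hdN
  have hd0 : 0 < dN := Int.gcd_pos_of_ne_zero_right p (by exact_mod_cast (by omega : r ≠ 0))
  have hdz : (0:ℤ) < (dN:ℤ) := by exact_mod_cast hd0
  have hdp : (dN:ℤ) ∣ p := Int.gcd_dvd_left p (r:ℤ)
  have hdr : (dN:ℤ) ∣ (r:ℤ) := Int.gcd_dvd_right p (r:ℤ)
  obtain ⟨p₁, hp₁⟩ := hdp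
  obtain ⟨r₁, hr₁⟩ := hdr
  have hr₁pos : 0 < r₁ := by nlinarith
  have hrp : r₁ * p = (r:ℤ) * p₁ := by rw [hp₁, hr₁]; ring
  have hdq : IsCoprime ((dN:ℤ)) q := by
    apply IsCoprime.of_isCoprime_of_dvd_left hpq
    rw [hp₁]; exact Dvd.intro _ rfl
  -- periodicity
  have hperp : ∀ j : ℤ, gp (j + r) = gp j := by
    intro j
    rw [hgp]
    simp only []
    have e : c + 2*(j+(r:ℤ))*p - k = (c + 2*j*p - k) + (2*(r:ℤ))*p := by ring
    rw [e]
    simp only [dvd_shift]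
    congr 1
    apply tz_eq r hr0
    exact ⟨-q*(c+2*j*p+(r:ℤ)*p), by ring⟩
  have hperm : ∀ j : ℤ, gm (j + r) = gm j := by
    intro j
    rw [hgm]
    simp only []
    have e : c + 2*(j+(r:ℤ))*p + k = (c + 2*j*p + k) + (2*(r:ℤ))*p := by ring
    rw [e]
    simp only [dvd_shift]
    congr 1
    apply tz_eq r hr0
    exact ⟨-q*(c+2*j*p+(r:ℤ)*p), by ring⟩
  by_cases hdk : (dN:ℤ) ∣ k
  · -- case d ∣ k
    by_cases hdc : (dN:ℤ) ∣ c
    · -- bijection case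
      obtain ⟨c₁, hc₁⟩ := hdc
      have bez := Int.gcd_eq_gcd_ab p (r:ℤ)
      set A := Int.gcdA p (r:ℤ)
      set B := Int.gcdB p (r:ℤ)
      have hgcdcast : ((Int.gcd p (r:ℤ) : ℕ) : ℤ) = (dN:ℤ) := by rw [hdN]
      set s : ℤ := -c₁ * A with hsdef
      set w₀ : ℤ := c₁ * B with hw₀def
      have hs : s * p = -c + (r:ℤ) * w₀ := by
        rw [hsdef, hw₀def, hc₁]
        have hb : ((p.gcd (r:ℤ) : ℕ) : ℤ) = p * A + (r:ℤ) * B := bez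
        linear_combination c₁ * hb - c₁ * hgcdcast
      have hpoint : ∀ j : ℤ, gp (s - j) = gm j := by
        intro j
        rw [hgp, hgm]
        simp only []
        have e : c + 2*(s-j)*p - k = -((c + 2*j*p + k)) + (2*(r:ℤ))*w₀ := by
          linear_combination 2*hs
        rw [e]
        simp only [dvd_shift, dvd_neg]
        congr 1
        apply tz_eq r hr0
        refine ⟨-q*(s-2*j)*w₀, ?_⟩
        linear_combination (-4*q*(s-2*j))*hs
      calc (∑ j ∈ Finset.range r, gp (j:ℤ)) - ∑ j ∈ Finset.range r, gm (j:ℤ)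
          = (∑ j ∈ Finset.range r, gp (s - (j:ℤ))) - ∑ j ∈ Finset.range r, gm (j:ℤ) := by
            congr 1
            exact (per_reflect r gp hr0 hperp s).symm
        _ = (∑ j ∈ Finset.range r, gm (j:ℤ)) - ∑ j ∈ Finset.range r, gm (j:ℤ) := by
            congr 1
            exact Finset.sum_congr rfl (fun j _ => hpoint (j:ℤ))
        _ = 0 := by ring
    · -- everything vanishes
      have hzp : ∀ j : ℤ, gp j = 0 := by
        intro j
        rw [hgp]
        simp only []
        rw [if_neg, mul_zero]
        intro hdvd
        apply hdc
        have h2r : (dN:ℤ) ∣ (2*(r:ℤ)) := ⟨2*r₁, by rw [hr₁]; ring⟩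
        have h1 : (dN:ℤ) ∣ (c + 2*j*p - k) := dvd_trans h2r hdvd
        have h2 : (dN:ℤ) ∣ 2*j*p := ⟨2*j*p₁, by rw [hp₁]; ring⟩
        have : c = (c + 2*j*p - k) - 2*j*p + k := by ring
        rw [this]
        exact (h1.sub h2).add hdk
      have hzm : ∀ j : ℤ, gm j = 0 := by
        intro j
        rw [hgm]
        simp only []
        rw [if_neg, mul_zero]
        intro hdvd
        apply hdc
        have h2r : (dN:ℤ) ∣ (2*(r:ℤ)) := ⟨2*r₁, by rw [hr₁]; ring⟩
        have h1 : (dN:ℤ) ∣ (c + 2*j*p + k) := dvd_trans h2r hdvd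
        have h2 : (dN:ℤ) ∣ 2*j*p := ⟨2*j*p₁, by rw [hp₁]; ring⟩
        have : c = (c + 2*j*p + k) - 2*j*p - k := by ring
        rw [this]
        exact (h1.sub h2).sub hdk
      have e1 : (∑ x ∈ Finset.range r, gp (x:ℤ)) = 0 := Finset.sum_eq_zero (fun j _ => hzp _)
      have e2 : (∑ x ∈ Finset.range r, gm (x:ℤ)) = 0 := Finset.sum_eq_zero (fun j _ => hzm _)
      rw [e1, e2, sub_zero]
  · -- case ¬ d ∣ k : geometric progression kills both sums
    have hzeta : ¬ (4*(r:ℤ)) ∣ (4*q*r₁*k) := by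
      intro h4
      obtain ⟨y, hy⟩ := h4
      have h5 : q*r₁*k = (r:ℤ)*y := by linarith
      have h6 : (q*k)*r₁ = ((dN:ℤ)*y)*r₁ := by linear_combination h5 + y*hr₁
      have h7 : q*k = (dN:ℤ)*y := mul_right_cancel₀ (ne_of_gt hr₁pos) h6
      exact hdk (hdq.dvd_of_dvd_mul_left ⟨y, h7⟩)
    have hXstep : ∀ j : ℤ, gp (j + r₁) = tconst r ^ (-(4*q*r₁*k)) * gp j := by
      intro j
      rw [hgp]
      simp only []
      have e : c + 2*(j+r₁)*p - k = (c + 2*j*p - k) + (2*(r:ℤ))*p₁ := by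
        linear_combination 2*hrp
      by_cases hind : (2*(r:ℤ)) ∣ (c + 2*j*p - k)
      · obtain ⟨w, hw⟩ := hind
        rw [if_pos (show (2*(r:ℤ)) ∣ (c + 2*(j+r₁)*p - k) from by
              rw [e]; exact (dvd_shift _ _ _).mpr ⟨w, hw⟩),
            if_pos ⟨w, hw⟩, mul_one, mul_one, ← tz_add]
        apply tz_eq r hr0
        refine ⟨-2*q*r₁*w - q*r₁*p₁, ?_⟩
        linear_combination (-4*q*r₁)*hw + (-4*q*r₁)*hrp
      · rw [if_neg (show ¬ (2*(r:ℤ)) ∣ (c + 2*(j+r₁)*p - k) from by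
              rw [e]; exact fun h => hind ((dvd_shift _ _ _).mp h)),
            if_neg hind, mul_zero, mul_zero, mul_zero]
    have hYstep : ∀ j : ℤ, gm (j + r₁) = tconst r ^ (4*q*r₁*k) * gm j := by
      intro j
      rw [hgm]
      simp only []
      have e : c + 2*(j+r₁)*p + k = (c + 2*j*p + k) + (2*(r:ℤ))*p₁ := by
        linear_combination 2*hrp
      by_cases hind : (2*(r:ℤ)) ∣ (c + 2*j*p + k)
      · obtain ⟨w, hw⟩ := hind
        rw [if_pos (show (2*(r:ℤ)) ∣ (c + 2*(j+r₁)*p + k) from by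
              rw [e]; exact (dvd_shift _ _ _).mpr ⟨w, hw⟩),
            if_pos ⟨w, hw⟩, mul_one, mul_one, ← tz_add]
        apply tz_eq r hr0
        refine ⟨-2*q*r₁*w - q*r₁*p₁, ?_⟩
        linear_combination (-4*q*r₁)*hw + (-4*q*r₁)*hrp
      · rw [if_neg (show ¬ (2*(r:ℤ)) ∣ (c + 2*(j+r₁)*p + k) from by
              rw [e]; exact fun h => hind ((dvd_shift _ _ _).mp h)),
            if_neg hind, mul_zero, mul_zero, mul_zero]
    have hXzero : ∑ j ∈ Finset.range r, gp (j:ℤ) = 0 := by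
      have h1 : ∑ j ∈ Finset.range r, gp (j:ℤ)
          = tconst r ^ (-(4*q*r₁*k)) * ∑ j ∈ Finset.range r, gp (j:ℤ) := by
        conv_lhs => rw [← per_shift r gp hr0 hperp r₁]
        rw [Finset.mul_sum]
        exact Finset.sum_congr rfl (fun j _ => hXstep (j:ℤ))
      have hζ : tconst r ^ (-(4*q*r₁*k)) ≠ 1 := by
        intro h1'
        rw [tconst_zpow_eq_one_iff r hr0] at h1'
        exact hzeta ((dvd_neg).mp h1')
      have h2 : (1 - tconst r ^ (-(4*q*r₁*k))) * (∑ j ∈ Finset.range r, gp (j:ℤ)) = 0 := by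
        linear_combination h1
      rcases mul_eq_zero.mp h2 with h3 | h3
      · exact absurd (sub_eq_zero.mp h3).symm hζ
      · exact h3
    have hYzero : ∑ j ∈ Finset.range r, gm (j:ℤ) = 0 := by
      have h1 : ∑ j ∈ Finset.range r, gm (j:ℤ)
          = tconst r ^ (4*q*r₁*k) * ∑ j ∈ Finset.range r, gm (j:ℤ) := by
        conv_lhs => rw [← per_shift r gm hr0 hperm r₁]
        rw [Finset.mul_sum]
        exact Finset.sum_congr rfl (fun j _ => hYstep (j:ℤ))
      have hζ : tconst r ^ (4*q*r₁*k) ≠ 1 := by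
        intro h1'
        rw [tconst_zpow_eq_one_iff r hr0] at h1'
        exact hzeta h1'
      have h2 : (1 - tconst r ^ (4*q*r₁*k)) * (∑ j ∈ Finset.range r, gm (j:ℤ)) = 0 := by
        linear_combination h1
      rcases mul_eq_zero.mp h2 with h3 | h3
      · exact absurd (sub_eq_zero.mp h3).symm hζ
      · exact h3
    rw [hXzero, hYzero, sub_zero]

lemma Gfun_rm1 (r : ℕ) (hr : 2 ≤ r) (p q : ℤ) (hpq : IsCoprime p q) {k : ℤ}
    (hk0 : 0 < k) (hkr : k < (r:ℤ)) (m : ℤ) : Gfun r p q k m (r-1) = 0 := by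
  unfold Gfun
  have hrange : r - 1 + 1 = r := by omega
  rw [hrange]
  have hN : ((r-1:ℕ):ℤ) = (r:ℤ) - 1 := by omega
  have hterm : ∀ j ∈ Finset.range r,
      tconst r ^ (-(((r-1:ℕ):ℤ)-2*(j:ℤ))^2*(p*q) + 2*(((r-1:ℕ):ℤ)-2*(j:ℤ))*q*m) *
        (eps r k (m - (((r-1:ℕ):ℤ)-2*(j:ℤ))*p) : ℂ)
      = tconst r ^ (-(((r:ℤ)-1)^2)*(p*q) + 2*((r:ℤ)-1)*q*m) *
          (tconst r ^ (-(4*(j:ℤ)*q*((m - ((r:ℤ)-1)*p)+(j:ℤ)*p))) *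
            (eps r k ((m - ((r:ℤ)-1)*p) + 2*(j:ℤ)*p) : ℂ)) := by
    intro j _
    rw [hN]
    have e1 : -(((r:ℤ)-1)-2*(j:ℤ))^2*(p*q) + 2*(((r:ℤ)-1)-2*(j:ℤ))*q*m
        = (-(((r:ℤ)-1)^2)*(p*q) + 2*((r:ℤ)-1)*q*m)
          + (-(4*(j:ℤ)*q*((m - ((r:ℤ)-1)*p)+(j:ℤ)*p))) := by ring
    have e2 : m - (((r:ℤ)-1)-2*(j:ℤ))*p = (m - ((r:ℤ)-1)*p) + 2*(j:ℤ)*p := by ring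
    rw [e1, e2, tz_add]
    ring
  rw [Finset.sum_congr rfl hterm, ← Finset.mul_sum,
    key_sum r hr p q hpq hk0 hkr (m - ((r:ℤ)-1)*p), mul_zero]

lemma aeval_chebS_entry (r : ℕ) (hr : 2 ≤ r) (p q : ℤ) (n : ℕ) :
    ∀ k m : Fin (r-1), (Polynomial.aeval (Cmat r p q) (chebS n)) k m
      = Gfun r p q ((k:ℤ)+1) ((m:ℤ)+1) n := by
  induction n using Nat.twoStepInduction with
  | zero =>
    intro k m
    rw [show chebS 0 = 1 from rfl, _root_.map_one, Gfun_zero]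
    rw [Matrix.one_apply]
    unfold eps
    have hk : (k:ℤ) + 1 ≤ r - 1 := by have := k.isLt; omega
    have hm : (m:ℤ) + 1 ≤ r - 1 := by have := m.isLt; omega
    by_cases hkm : k = m
    · subst hkm
      rw [if_pos rfl, if_pos (by simp)]; norm_num
    · rw [if_neg hkm, if_neg, if_neg]
      · norm_num
      · intro hd
        have := small_dvd hd (by omega) (by omega); omega
      · intro hd
        have h0 := small_dvd hd (by omega) (by omega)
        have : (m:ℤ) = (k:ℤ) := by omega
        exact hkm (Fin.ext (by exact_mod_cast this.symm))
  | one =>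
    intro k m
    rw [show chebS 1 = Polynomial.X from rfl, Polynomial.aeval_X]
    show Cmat r p q k m = _
    unfold Gfun Cmat
    rw [Finset.sum_range_succ, Finset.sum_range_one]
    simp only [Matrix.of_apply]
    rw [mul_add, ← mul_assoc, ← mul_assoc, ← tz_add, ← tz_add]
    have e1 : -(p*q) + 2*q*((m:ℤ)+1) = -((1:ℤ)-2*(0:ℤ))^2*(p*q) + 2*((1:ℤ)-2*(0:ℤ))*q*((m:ℤ)+1) := by push_cast; ring
    have e2 : -(p*q) + -(2*q*((m:ℤ)+1)) = -((1:ℤ)-2*((1:ℕ):ℤ))^2*(p*q) + 2*((1:ℤ)-2*((1:ℕ):ℤ))*q*((m:ℤ)+1) := by push_cast; ring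
    have e3 : ((m:ℤ)+1) - p = ((m:ℤ)+1) - ((1:ℤ)-2*(0:ℤ))*p := by ring
    have e4 : ((m:ℤ)+1) + p = ((m:ℤ)+1) - ((1:ℤ)-2*((1:ℕ):ℤ))*p := by push_cast; ring
    rw [e1, e2, e3, e4]
    push_cast
    ring_nf
  | more n ih0 ih1 =>
    intro k m
    have hstep : chebS (n+2) = chebS (n+1) * Polynomial.X - chebS n := by
      rw [show chebS (n+2) = Polynomial.X * chebS (n+1) - chebS n from rfl, mul_comm]
    rw [hstep, map_sub, _root_.map_mul, Polynomial.aeval_X, Matrix.sub_apply, Matrix.mul_apply]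
    set m' : ℤ := (m:ℤ) + 1 with hm'
    set F : ℤ → ℂ := fun x => Gfun r p q ((k:ℤ)+1) x (n+1) with hF
    have expand : ∀ l : Fin (r-1),
        (Polynomial.aeval (Cmat r p q) (chebS (n+1))) k l * Cmat r p q l m
        = tconst r ^ (-(p*q)) * (tconst r ^ (2*q*m') * (F ((l:ℤ)+1) * (eps r ((l:ℤ)+1) (m'-p) : ℂ))
          + tconst r ^ (-(2*q*m')) * (F ((l:ℤ)+1) * (eps r ((l:ℤ)+1) (m'+p) : ℂ))) := by
      intro l
      rw [ih1 k l]
      show Gfun r p q ((k:ℤ)+1) ((l:ℤ)+1) (n+1) * Matrix.of _ l m = _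
      simp only [Matrix.of_apply, hF]
      ring
    rw [Finset.sum_congr rfl (fun l _ => expand l)]
    rw [← Finset.mul_sum, Finset.sum_add_distrib, ← Finset.mul_sum, ← Finset.mul_sum]
    have hconv1 : ∑ l : Fin (r-1), F ((l:ℤ)+1) * (eps r ((l:ℤ)+1) (m'-p) : ℂ)
        = ∑ l ∈ Finset.range (r-1), F ((l:ℤ)+1) * (eps r ((l:ℤ)+1) (m'-p) : ℂ) :=
      Fin.sum_univ_eq_sum_range (fun l : ℕ => F ((l:ℤ)+1) * (eps r ((l:ℤ)+1) (m'-p) : ℂ)) (r-1)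
    have hconv2 : ∑ l : Fin (r-1), F ((l:ℤ)+1) * (eps r ((l:ℤ)+1) (m'+p) : ℂ)
        = ∑ l ∈ Finset.range (r-1), F ((l:ℤ)+1) * (eps r ((l:ℤ)+1) (m'+p) : ℂ) :=
      Fin.sum_univ_eq_sum_range (fun l : ℕ => F ((l:ℤ)+1) * (eps r ((l:ℤ)+1) (m'+p) : ℂ)) (r-1)
    have hk0 : (0:ℤ) < (k:ℤ)+1 := by positivity
    have hkr : (k:ℤ)+1 < r := by have := k.isLt; omega
    have hper : ∀ j s, F (j + 2*r*s) = F j := fun j s => Gfun_per r (by omega) p q _ _ j s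
    have hodd : ∀ j, F (-j) = - F j := fun j => Gfun_odd r (by omega) p q hk0 hkr _ j
    rw [hconv1, hconv2, sum_eps_mul r hr F hper hodd (m'-p), sum_eps_mul r hr F hper hodd (m'+p)]
    rw [hF]
    simp only []
    rw [Gfun_rec r p q ((k:ℤ)+1) n m', ih0 k m]
    ring

/-- For coprime `p, q`, the Chebyshev polynomial of the second kind of degree `r−1`
vanishes on `C(p,q)`: the curve of slope `p/q` colored by the `r`-dimensional irreducible
representation is the zero operator. -/
theorem chebS_Cmat_eq_zero (r : ℕ) (hr : 2 ≤ r) (p q : ℤ) (hpq : IsCoprime p q) :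
    Polynomial.aeval (Cmat r p q) (chebS (r - 1)) = 0 := by
  ext k m
  rw [aeval_chebS_entry r hr p q (r-1) k m]
  have hk0 : (0:ℤ) < (k:ℤ)+1 := by positivity
  have hkr : (k:ℤ)+1 < (r:ℤ) := by have := k.isLt; omega
  rw [Gfun_rm1 r hr p q hpq hk0 hkr ((m:ℤ)+1)]
  simp
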